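/- For every θ ∈ ℝ^𝔠, the symmetric matrix B(θ) with entries B_{ij}(θ) = 𝔤_{ij}(θ) + (1/2) Σ_k θ^k ∂_k 𝔤_{ij}(θ) satisfies c₁ I ⪯ B(θ) ⪯ c₂ I, where c₁ = −(c²−1)/(2e), c₂ = (1/2)(1 + (c²−1)/e), and c = 𝔠 + 1. -/

import Mathlib

open scoped Matrix

noncomputable def psiFn (𝔠 : ℕ) (θ : Fin 𝔠 → ℝ) : ℝ :=
  Real.log (1 + ∑ j, Real.exp (θ j))

noncomputable def pFn (𝔠 : ℕ) (i : Fin 𝔠) (θ : Fin 𝔠 → ℝ) : ℝ :=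
  Real.exp (θ i - psiFn 𝔠 θ)

/-- Fisher-Rao metric 𝔤_{ij} = δ_{ij} p_i − p_i p_j. -/
noncomputable def frMetric (𝔠 : ℕ) (i j : Fin 𝔠) (θ : Fin 𝔠 → ℝ) : ℝ :=
  (if i = j then pFn 𝔠 i θ else 0) - pFn 𝔠 i θ * pFn 𝔠 j θ

/-- B(θ) with entries B_{ij}(θ) = 𝔤_{ij}(θ) + (1/2) Σ_k θ^k ∂_k 𝔤_{ij}(θ). -/
noncomputable def Bmat (𝔠 : ℕ) (θ : Fin 𝔠 → ℝ) : Matrix (Fin 𝔠) (Fin 𝔠) ℝ :=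
  Matrix.of fun i j =>
    frMetric 𝔠 i j θ +
      (1 / 2) * ∑ k, θ k * fderiv ℝ (fun θ' => frMetric 𝔠 i j θ') θ (Pi.single k 1)

noncomputable def Zf (𝔠 : ℕ) (θ : Fin 𝔠 → ℝ) : ℝ := 1 + ∑ j, Real.exp (θ j)

lemma Zf_pos (𝔠 : ℕ) (θ : Fin 𝔠 → ℝ) : 0 < Zf 𝔠 θ := by
  have : (0:ℝ) ≤ ∑ j, Real.exp (θ j) :=
    Finset.sum_nonneg fun j _ => (Real.exp_pos _).le
  unfold Zf; linarith

lemma pFn_eq (𝔠 : ℕ) (i : Fin 𝔠) (θ : Fin 𝔠 → ℝ) :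
    pFn 𝔠 i θ = Real.exp (θ i) / Zf 𝔠 θ := by
  unfold pFn psiFn
  rw [Real.exp_sub, show Real.log (1 + ∑ j, Real.exp (θ j)) = Real.log (Zf 𝔠 θ) from rfl,
    Real.exp_log (Zf_pos 𝔠 θ)]

lemma pFn_pos (𝔠 : ℕ) (i : Fin 𝔠) (θ : Fin 𝔠 → ℝ) : 0 < pFn 𝔠 i θ :=
  Real.exp_pos _

lemma sum_pFn_le (𝔠 : ℕ) (θ : Fin 𝔠 → ℝ) : ∑ i, pFn 𝔠 i θ ≤ 1 := by
  have hZ := Zf_pos 𝔠 θ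
  have : ∑ i, pFn 𝔠 i θ = (∑ i, Real.exp (θ i)) / Zf 𝔠 θ := by
    rw [Finset.sum_div]; exact Finset.sum_congr rfl fun i _ => pFn_eq 𝔠 i θ
  rw [this, div_le_one hZ]
  unfold Zf; linarith

lemma pFn_le_one (𝔠 : ℕ) (i : Fin 𝔠) (θ : Fin 𝔠 → ℝ) : pFn 𝔠 i θ ≤ 1 := by
  have h := sum_pFn_le 𝔠 θ
  have : pFn 𝔠 i θ ≤ ∑ j, pFn 𝔠 j θ :=
    Finset.single_le_sum (fun j _ => (pFn_pos 𝔠 j θ).le) (Finset.mem_univ i)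
  linarith

noncomputable def Dp (𝔠 : ℕ) (i : Fin 𝔠) (θ : Fin 𝔠 → ℝ) : (Fin 𝔠 → ℝ) →L[ℝ] ℝ :=
  pFn 𝔠 i θ • ((ContinuousLinearMap.proj i : (Fin 𝔠 → ℝ) →L[ℝ] ℝ)
    - ∑ j, pFn 𝔠 j θ • (ContinuousLinearMap.proj j : (Fin 𝔠 → ℝ) →L[ℝ] ℝ))

lemma hasFDerivAt_Zf (𝔠 : ℕ) (θ : Fin 𝔠 → ℝ) :
    HasFDerivAt (Zf 𝔠)
      (∑ j, Real.exp (θ j) • (ContinuousLinearMap.proj j : (Fin 𝔠 → ℝ) →L[ℝ] ℝ)) θ := by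
  have h : ∀ j : Fin 𝔠, HasFDerivAt (fun θ' : Fin 𝔠 → ℝ => Real.exp (θ' j))
      (Real.exp (θ j) • (ContinuousLinearMap.proj j : (Fin 𝔠 → ℝ) →L[ℝ] ℝ)) θ :=
    fun j => (ContinuousLinearMap.proj j : (Fin 𝔠 → ℝ) →L[ℝ] ℝ).hasFDerivAt.exp
  have hs := HasFDerivAt.sum (fun j (_ : j ∈ Finset.univ) => h j)
  have e : Zf 𝔠 = fun x => 1 + (∑ i, fun θ' : Fin 𝔠 → ℝ => Real.exp (θ' i)) x := by
    funext x; simp [Zf, Finset.sum_apply]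
  rw [e]; exact hs.const_add 1

lemma hasFDerivAt_pFn (𝔠 : ℕ) (i : Fin 𝔠) (θ : Fin 𝔠 → ℝ) :
    HasFDerivAt (pFn 𝔠 i) (Dp 𝔠 i θ) θ := by
  have hZ := hasFDerivAt_Zf 𝔠 θ
  have hZne : Zf 𝔠 θ ≠ 0 := (Zf_pos 𝔠 θ).ne'
  have hinv := (hasDerivAt_inv hZne).comp_hasFDerivAt θ hZ
  have hei : HasFDerivAt (fun θ' : Fin 𝔠 → ℝ => Real.exp (θ' i))
      (Real.exp (θ i) • (ContinuousLinearMap.proj i : (Fin 𝔠 → ℝ) →L[ℝ] ℝ)) θ :=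
    (ContinuousLinearMap.proj i : (Fin 𝔠 → ℝ) →L[ℝ] ℝ).hasFDerivAt.exp
  have h := hei.mul hinv
  have hfun : pFn 𝔠 i = fun θ' => Real.exp (θ' i) * (Zf 𝔠 θ')⁻¹ := by
    funext θ'
    rw [pFn_eq, div_eq_mul_inv]
  rw [hfun]
  refine h.congr_fderiv ?_
  symm
  ext v
  simp only [Function.comp_apply, Dp, ContinuousLinearMap.smul_apply, ContinuousLinearMap.sub_apply,
    ContinuousLinearMap.add_apply, ContinuousLinearMap.sum_apply, ContinuousLinearMap.proj_apply,
    smul_eq_mul]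
  have hp : ∀ j, pFn 𝔠 j θ = Real.exp (θ j) / Zf 𝔠 θ := fun j => pFn_eq 𝔠 j θ
  rw [hp i]
  have hZne : Zf 𝔠 θ ≠ 0 := (Zf_pos 𝔠 θ).ne'
  have hsum : ∑ j, pFn 𝔠 j θ * v j = (∑ j, Real.exp (θ j) * v j) / Zf 𝔠 θ := by
    rw [Finset.sum_div]; exact Finset.sum_congr rfl fun j _ => by rw [hp j]; ring
  rw [hsum]
  field_simp
  ring

lemma Dp_single (𝔠 : ℕ) (i k : Fin 𝔠) (θ : Fin 𝔠 → ℝ) :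
    Dp 𝔠 i θ (Pi.single k 1) = pFn 𝔠 i θ * ((if i = k then 1 else 0) - pFn 𝔠 k θ) := by
  simp only [Dp, ContinuousLinearMap.smul_apply, ContinuousLinearMap.sub_apply,
    ContinuousLinearMap.sum_apply, ContinuousLinearMap.proj_apply, smul_eq_mul]
  have h1 : (Pi.single k (1:ℝ) : Fin 𝔠 → ℝ) i = if i = k then 1 else 0 := by
    simp [Pi.single_apply]
  have h2 : ∑ j, pFn 𝔠 j θ * (Pi.single k (1:ℝ) : Fin 𝔠 → ℝ) j = pFn 𝔠 k θ := by
    rw [Finset.sum_eq_single k]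
    · simp
    · intro j _ hj; simp [Pi.single_apply, hj]
    · intro h; exact absurd (Finset.mem_univ k) h
  rw [h1, h2]

lemma hasFDerivAt_fr (𝔠 : ℕ) (i j : Fin 𝔠) (θ : Fin 𝔠 → ℝ) :
    HasFDerivAt (fun θ' => frMetric 𝔠 i j θ')
      ((if i = j then (1:ℝ) else 0) • Dp 𝔠 i θ
        - (pFn 𝔠 i θ • Dp 𝔠 j θ + pFn 𝔠 j θ • Dp 𝔠 i θ)) θ := by
  have hmul := (hasFDerivAt_pFn 𝔠 i θ).mul (hasFDerivAt_pFn 𝔠 j θ)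
  by_cases h : i = j
  · have := ((hasFDerivAt_pFn 𝔠 i θ).sub hmul)
    simp only [frMetric, if_pos h]
    refine this.congr_fderiv ?_
    simp [h]
  · simp only [frMetric, if_neg h]
    have := (hasFDerivAt_const (0:ℝ) θ).sub hmul
    refine this.congr_fderiv ?_
    simp [h]

lemma fderiv_fr_single (𝔠 : ℕ) (i j k : Fin 𝔠) (θ : Fin 𝔠 → ℝ) :
    fderiv ℝ (fun θ' => frMetric 𝔠 i j θ') θ (Pi.single k 1)
      = (if i = j then (1:ℝ) else 0) * (pFn 𝔠 i θ * ((if i = k then 1 else 0) - pFn 𝔠 k θ))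
        - (pFn 𝔠 i θ * (pFn 𝔠 j θ * ((if j = k then 1 else 0) - pFn 𝔠 k θ))
          + pFn 𝔠 j θ * (pFn 𝔠 i θ * ((if i = k then 1 else 0) - pFn 𝔠 k θ))) := by
  rw [(hasFDerivAt_fr 𝔠 i j θ).fderiv]
  simp only [ContinuousLinearMap.sub_apply, ContinuousLinearMap.add_apply,
    ContinuousLinearMap.smul_apply, smul_eq_mul, Dp_single]

noncomputable def Sf (𝔠 : ℕ) (θ : Fin 𝔠 → ℝ) : ℝ := ∑ k, θ k * pFn 𝔠 k θ

noncomputable def cF (𝔠 : ℕ) (i : Fin 𝔠) (θ : Fin 𝔠 → ℝ) : ℝ :=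
  pFn 𝔠 i θ * (θ i - Sf 𝔠 θ)

lemma sum_theta (𝔠 : ℕ) (i : Fin 𝔠) (θ : Fin 𝔠 → ℝ) :
    ∑ k, θ k * (pFn 𝔠 i θ * ((if i = k then 1 else 0) - pFn 𝔠 k θ)) = cF 𝔠 i θ := by
  have : ∀ k, θ k * (pFn 𝔠 i θ * ((if i = k then 1 else 0) - pFn 𝔠 k θ))
      = (if i = k then θ k * pFn 𝔠 i θ else 0) - pFn 𝔠 i θ * (θ k * pFn 𝔠 k θ) := by
    intro k; by_cases h : i = k <;> simp [h] <;> ring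
  rw [Finset.sum_congr rfl fun k _ => this k, Finset.sum_sub_distrib]
  rw [Finset.sum_ite_eq Finset.univ i (fun k => θ k * pFn 𝔠 i θ)]
  simp only [Finset.mem_univ, if_pos, ← Finset.mul_sum]
  unfold cF Sf
  ring

lemma Bmat_apply (𝔠 : ℕ) (θ : Fin 𝔠 → ℝ) (i j : Fin 𝔠) :
    Bmat 𝔠 θ i j = (if i = j then pFn 𝔠 i θ + cF 𝔠 i θ / 2 else 0)
      - pFn 𝔠 i θ * pFn 𝔠 j θ
      - (pFn 𝔠 j θ * cF 𝔠 i θ + pFn 𝔠 i θ * cF 𝔠 j θ) / 2 := by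
  have hsum : ∑ k, θ k * fderiv ℝ (fun θ' => frMetric 𝔠 i j θ') θ (Pi.single k 1)
      = (if i = j then (1:ℝ) else 0) * cF 𝔠 i θ
        - (pFn 𝔠 i θ * cF 𝔠 j θ + pFn 𝔠 j θ * cF 𝔠 i θ) := by
    have : ∀ k, θ k * fderiv ℝ (fun θ' => frMetric 𝔠 i j θ') θ (Pi.single k 1)
        = (if i = j then (1:ℝ) else 0)
            * (θ k * (pFn 𝔠 i θ * ((if i = k then 1 else 0) - pFn 𝔠 k θ)))
          - (pFn 𝔠 i θ * (θ k * (pFn 𝔠 j θ * ((if j = k then 1 else 0) - pFn 𝔠 k θ)))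
            + pFn 𝔠 j θ * (θ k * (pFn 𝔠 i θ * ((if i = k then 1 else 0) - pFn 𝔠 k θ)))) := by
      intro k; rw [fderiv_fr_single]; ring
    rw [Finset.sum_congr rfl fun k _ => this k, Finset.sum_sub_distrib, ← Finset.mul_sum,
      sum_theta]
    congr 1
    rw [Finset.sum_add_distrib, ← Finset.mul_sum, ← Finset.mul_sum, sum_theta, sum_theta]
  show frMetric 𝔠 i j θ + (1/2) * _ = _
  rw [hsum]
  unfold frMetric
  by_cases h : i = j <;> simp [h] <;> ring

lemma le_exp_div (u : ℝ) : u ≤ Real.exp u / Real.exp 1 := by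
  rw [le_div_iff₀ (Real.exp_pos 1)]
  have h := Real.add_one_le_exp (u - 1)
  have h2 : u ≤ Real.exp (u - 1) := by linarith
  calc u * Real.exp 1 ≤ Real.exp (u - 1) * Real.exp 1 :=
        mul_le_mul_of_nonneg_right h2 (Real.exp_pos 1).le
    _ = Real.exp u := by rw [← Real.exp_add]; ring_nf

lemma key_ineq' {a b : ℝ} (h : b ≤ a) :
    Real.exp a * Real.exp b * (a - b) ≤ (Real.exp a + Real.exp b) ^ 2 / Real.exp 1 := by
  have h1 : a - b ≤ Real.exp (a - b) / Real.exp 1 := le_exp_div _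
  have h2 : Real.exp a * Real.exp b * (a - b)
      ≤ Real.exp a * Real.exp b * (Real.exp (a - b) / Real.exp 1) :=
    mul_le_mul_of_nonneg_left h1 (by positivity)
  have h3 : Real.exp a * Real.exp b * (Real.exp (a - b) / Real.exp 1)
      = Real.exp a ^ 2 / Real.exp 1 := by
    rw [← Real.exp_add]
    rw [show Real.exp (a + b) * (Real.exp (a - b) / Real.exp 1)
      = Real.exp (a + b) * Real.exp (a - b) / Real.exp 1 by ring, ← Real.exp_add,
      show a + b + (a - b) = a + a by ring, show Real.exp (a + a) = Real.exp a ^ 2 by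
        rw [Real.exp_add]; ring]
  have h4 : Real.exp a ^ 2 ≤ (Real.exp a + Real.exp b) ^ 2 := by nlinarith [Real.exp_pos b, Real.exp_pos a]
  calc Real.exp a * Real.exp b * (a - b) ≤ Real.exp a ^ 2 / Real.exp 1 := by rw [← h3]; exact h2
    _ ≤ (Real.exp a + Real.exp b) ^ 2 / Real.exp 1 := by
        gcongr

lemma key_ineq (a b : ℝ) :
    Real.exp a * Real.exp b * |a - b| ≤ (Real.exp a + Real.exp b) ^ 2 / Real.exp 1 := by
  rcases le_total b a with h | h
  · rw [abs_of_nonneg (sub_nonneg.2 h)]; exact key_ineq' h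
  · rw [abs_of_nonpos (sub_nonpos.2 h), neg_sub]
    have := key_ineq' h
    calc Real.exp a * Real.exp b * (b - a) = Real.exp b * Real.exp a * (b - a) := by ring
      _ ≤ (Real.exp b + Real.exp a) ^ 2 / Real.exp 1 := this
      _ = (Real.exp a + Real.exp b) ^ 2 / Real.exp 1 := by ring

lemma pair_term_le (𝔠 : ℕ) (θ : Fin 𝔠 → ℝ) {x y : ℝ}
    (hxy : Real.exp x + Real.exp y ≤ Zf 𝔠 θ) :
    Real.exp x / Zf 𝔠 θ * (Real.exp y / Zf 𝔠 θ) * |x - y| ≤ 1 / Real.exp 1 := by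
  have hZ := Zf_pos 𝔠 θ
  have h1 := key_ineq x y
  have h2 : (Real.exp x + Real.exp y) ^ 2 ≤ Zf 𝔠 θ ^ 2 := by
    have : (0:ℝ) ≤ Real.exp x + Real.exp y := by positivity
    nlinarith
  have h3 : Real.exp x * Real.exp y * |x - y| ≤ Zf 𝔠 θ ^ 2 / Real.exp 1 := by
    calc Real.exp x * Real.exp y * |x - y| ≤ (Real.exp x + Real.exp y) ^ 2 / Real.exp 1 := h1
      _ ≤ Zf 𝔠 θ ^ 2 / Real.exp 1 := by gcongr
  have heq : Real.exp x / Zf 𝔠 θ * (Real.exp y / Zf 𝔠 θ) * |x - y|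
      = Real.exp x * Real.exp y * |x - y| / Zf 𝔠 θ ^ 2 := by ring
  rw [heq, div_le_iff₀ (by positivity)]
  calc Real.exp x * Real.exp y * |x - y| ≤ Zf 𝔠 θ ^ 2 / Real.exp 1 := h3
    _ = 1 / Real.exp 1 * Zf 𝔠 θ ^ 2 := by ring

lemma exp_add_exp_le (𝔠 : ℕ) (θ : Fin 𝔠 → ℝ) {i k : Fin 𝔠} (hik : i ≠ k) :
    Real.exp (θ i) + Real.exp (θ k) ≤ Zf 𝔠 θ := by
  have h : Real.exp (θ i) + Real.exp (θ k) = ∑ j ∈ ({i, k} : Finset (Fin 𝔠)), Real.exp (θ j) := by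
    rw [Finset.sum_pair hik]
  have h2 : ∑ j ∈ ({i, k} : Finset (Fin 𝔠)), Real.exp (θ j) ≤ ∑ j, Real.exp (θ j) :=
    Finset.sum_le_sum_of_subset_of_nonneg (Finset.subset_univ _)
      (fun j _ _ => (Real.exp_pos _).le)
  unfold Zf; linarith

lemma cF_abs_le (𝔠 : ℕ) (i : Fin 𝔠) (θ : Fin 𝔠 → ℝ) :
    |cF 𝔠 i θ| ≤ 𝔠 / Real.exp 1 := by
  have hZ := Zf_pos 𝔠 θ
  have hp : ∀ j, pFn 𝔠 j θ = Real.exp (θ j) / Zf 𝔠 θ := fun j => pFn_eq 𝔠 j θ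
  have hdecomp : cF 𝔠 i θ = pFn 𝔠 i θ * θ i * (1 - ∑ k, pFn 𝔠 k θ)
      + ∑ k, pFn 𝔠 i θ * pFn 𝔠 k θ * (θ i - θ k) := by
    have e1 : ∑ k, pFn 𝔠 i θ * pFn 𝔠 k θ * (θ i - θ k)
        = ∑ k, (pFn 𝔠 i θ * θ i * pFn 𝔠 k θ - pFn 𝔠 i θ * (θ k * pFn 𝔠 k θ)) :=
      Finset.sum_congr rfl fun k _ => by ring
    rw [e1, Finset.sum_sub_distrib, ← Finset.mul_sum, ← Finset.mul_sum]
    unfold cF Sf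
    ring
  have h1σ : 1 - ∑ k, pFn 𝔠 k θ = 1 / Zf 𝔠 θ := by
    have e2 : ∑ k, pFn 𝔠 k θ = (∑ k, Real.exp (θ k)) / Zf 𝔠 θ := by
      rw [Finset.sum_div]; exact Finset.sum_congr rfl fun k _ => hp k
    rw [e2]
    have : Zf 𝔠 θ = 1 + ∑ k, Real.exp (θ k) := rfl
    field_simp
    linarith [this]
  have hA : |pFn 𝔠 i θ * θ i * (1 - ∑ k, pFn 𝔠 k θ)| ≤ 1 / Real.exp 1 := by
    have hle : Real.exp (θ i) + Real.exp 0 ≤ Zf 𝔠 θ := by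
      have : Real.exp (θ i) ≤ ∑ j, Real.exp (θ j) :=
        Finset.single_le_sum (fun j _ => (Real.exp_pos (θ j)).le) (Finset.mem_univ i)
      rw [Real.exp_zero]
      unfold Zf; linarith
    have hpt := pair_term_le 𝔠 θ hle
    rw [h1σ, abs_mul, abs_mul, abs_of_pos (pFn_pos 𝔠 i θ), abs_of_pos (by positivity : (0:ℝ) < 1 / Zf 𝔠 θ)]
    have heq : pFn 𝔠 i θ * |θ i| * (1 / Zf 𝔠 θ)
        = Real.exp (θ i) / Zf 𝔠 θ * (Real.exp 0 / Zf 𝔠 θ) * |θ i - 0| := by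
      rw [hp i, Real.exp_zero, sub_zero]; ring
    rw [heq]; exact hpt
  have hT : ∀ k, |pFn 𝔠 i θ * pFn 𝔠 k θ * (θ i - θ k)| ≤ if k = i then 0 else 1 / Real.exp 1 := by
    intro k
    by_cases hk : k = i
    · simp [hk]
    · rw [if_neg hk]
      have hle := exp_add_exp_le 𝔠 θ (i := i) (k := k) (fun h => hk h.symm)
      have hpt := pair_term_le 𝔠 θ hle
      rw [abs_mul, abs_of_pos (mul_pos (pFn_pos 𝔠 i θ) (pFn_pos 𝔠 k θ)), hp i, hp k]
      exact hpt
  have hsumT : |∑ k, pFn 𝔠 i θ * pFn 𝔠 k θ * (θ i - θ k)| ≤ (𝔠 - 1) / Real.exp 1 := by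
    calc |∑ k, pFn 𝔠 i θ * pFn 𝔠 k θ * (θ i - θ k)|
        ≤ ∑ k, |pFn 𝔠 i θ * pFn 𝔠 k θ * (θ i - θ k)| := Finset.abs_sum_le_sum_abs _ _
      _ ≤ ∑ k, (if k = i then 0 else 1 / Real.exp 1) := Finset.sum_le_sum fun k _ => hT k
      _ = (𝔠 - 1) / Real.exp 1 := by
          have e3 : ∀ k : Fin 𝔠, (if k = i then (0:ℝ) else 1 / Real.exp 1)
              = 1 / Real.exp 1 - (if k = i then 1 / Real.exp 1 else 0) := by
            intro k; by_cases h : k = i <;> simp [h]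
          rw [Finset.sum_congr rfl fun k _ => e3 k, Finset.sum_sub_distrib,
            Finset.sum_ite_eq' Finset.univ i (fun _ => 1 / Real.exp 1), Finset.sum_const]
          simp [Finset.card_univ, nsmul_eq_mul]
          ring
  calc |cF 𝔠 i θ| ≤ |pFn 𝔠 i θ * θ i * (1 - ∑ k, pFn 𝔠 k θ)|
        + |∑ k, pFn 𝔠 i θ * pFn 𝔠 k θ * (θ i - θ k)| := by rw [hdecomp]; exact abs_add_le _ _
    _ ≤ 1 / Real.exp 1 + (𝔠 - 1) / Real.exp 1 := add_le_add hA hsumT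
    _ = 𝔠 / Real.exp 1 := by ring

lemma quad_form (𝔠 : ℕ) (θ v : Fin 𝔠 → ℝ) :
    v ⬝ᵥ (Bmat 𝔠 θ).mulVec v
      = ((∑ i, pFn 𝔠 i θ * v i ^ 2) - (∑ i, pFn 𝔠 i θ * v i) ^ 2)
        + (∑ i, cF 𝔠 i θ * v i ^ 2) / 2
        - (∑ i, pFn 𝔠 i θ * v i) * (∑ i, cF 𝔠 i θ * v i) := by
  have hterm : ∀ i j, v i * (Bmat 𝔠 θ i j * v j)
      = (if i = j then pFn 𝔠 i θ * v i ^ 2 + cF 𝔠 i θ * v i ^ 2 / 2 else 0)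
        - (pFn 𝔠 i θ * v i) * (pFn 𝔠 j θ * v j)
        - ((cF 𝔠 i θ * v i) * (pFn 𝔠 j θ * v j)
          + (pFn 𝔠 i θ * v i) * (cF 𝔠 j θ * v j)) / 2 := by
    intro i j
    rw [Bmat_apply]
    by_cases h : i = j
    · subst h; simp only [eq_self_iff_true, if_true]; ring
    · simp only [if_neg h]; ring
  have h1 : v ⬝ᵥ (Bmat 𝔠 θ).mulVec v = ∑ i, ∑ j, v i * (Bmat 𝔠 θ i j * v j) := by
    simp [dotProduct, Matrix.mulVec, Finset.mul_sum]
  rw [h1, Finset.sum_congr rfl fun i _ => Finset.sum_congr rfl fun j _ => hterm i j]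
  simp only [Finset.sum_sub_distrib]
  have hA : ∑ i : Fin 𝔠, ∑ j : Fin 𝔠,
      (if i = j then pFn 𝔠 i θ * v i ^ 2 + cF 𝔠 i θ * v i ^ 2 / 2 else 0)
      = (∑ i, pFn 𝔠 i θ * v i ^ 2) + (∑ i, cF 𝔠 i θ * v i ^ 2) / 2 := by
    have : ∀ i : Fin 𝔠, ∑ j : Fin 𝔠,
        (if i = j then pFn 𝔠 i θ * v i ^ 2 + cF 𝔠 i θ * v i ^ 2 / 2 else 0)
        = pFn 𝔠 i θ * v i ^ 2 + cF 𝔠 i θ * v i ^ 2 / 2 := by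
      intro i
      rw [Finset.sum_ite_eq Finset.univ i
        (fun _ => pFn 𝔠 i θ * v i ^ 2 + cF 𝔠 i θ * v i ^ 2 / 2)]
      simp
    rw [Finset.sum_congr rfl fun i _ => this i, Finset.sum_add_distrib, ← Finset.sum_div]
  have hB : ∑ i : Fin 𝔠, ∑ j : Fin 𝔠, (pFn 𝔠 i θ * v i) * (pFn 𝔠 j θ * v j)
      = (∑ i, pFn 𝔠 i θ * v i) ^ 2 := by
    rw [sq, Finset.sum_mul_sum]
  have hC : ∑ i : Fin 𝔠, ∑ j : Fin 𝔠,
      ((cF 𝔠 i θ * v i) * (pFn 𝔠 j θ * v j) + (pFn 𝔠 i θ * v i) * (cF 𝔠 j θ * v j)) / 2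
      = (∑ i, pFn 𝔠 i θ * v i) * (∑ i, cF 𝔠 i θ * v i) := by
    have : ∀ i : Fin 𝔠, ∑ j : Fin 𝔠,
        ((cF 𝔠 i θ * v i) * (pFn 𝔠 j θ * v j) + (pFn 𝔠 i θ * v i) * (cF 𝔠 j θ * v j)) / 2
        = ((cF 𝔠 i θ * v i) * (∑ j, pFn 𝔠 j θ * v j)
          + (pFn 𝔠 i θ * v i) * (∑ j, cF 𝔠 j θ * v j)) / 2 := by
      intro i
      rw [← Finset.sum_div, Finset.sum_add_distrib, ← Finset.mul_sum, ← Finset.mul_sum]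
    rw [Finset.sum_congr rfl fun i _ => this i, ← Finset.sum_div, Finset.sum_add_distrib,
      ← Finset.sum_mul, ← Finset.sum_mul]
    ring
  rw [hA, hB, hC]
  ring

lemma var_bounds (𝔠 : ℕ) (θ v : Fin 𝔠 → ℝ) :
    0 ≤ (∑ i, pFn 𝔠 i θ * v i ^ 2) - (∑ i, pFn 𝔠 i θ * v i) ^ 2
    ∧ (∑ i, pFn 𝔠 i θ * v i ^ 2) - (∑ i, pFn 𝔠 i θ * v i) ^ 2 ≤ (∑ i, v i ^ 2) / 2 := by
  have hp0 : ∀ i, 0 < pFn 𝔠 i θ := fun i => pFn_pos 𝔠 i θ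
  have hσ : ∑ i, pFn 𝔠 i θ ≤ 1 := sum_pFn_le 𝔠 θ
  have hQ0 : 0 ≤ ∑ i, pFn 𝔠 i θ * v i ^ 2 :=
    Finset.sum_nonneg fun i _ => mul_nonneg (pFn_pos 𝔠 i θ).le (sq_nonneg _)
  constructor
  · -- Cauchy–Schwarz: P² ≤ σ Q ≤ Q
    have hcs : (∑ i, Real.sqrt (pFn 𝔠 i θ) * (Real.sqrt (pFn 𝔠 i θ) * v i)) ^ 2
        ≤ (∑ i, Real.sqrt (pFn 𝔠 i θ) ^ 2) * ∑ i, (Real.sqrt (pFn 𝔠 i θ) * v i) ^ 2 :=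
      Finset.sum_mul_sq_le_sq_mul_sq _ _ _
    have e1 : ∀ i, Real.sqrt (pFn 𝔠 i θ) * (Real.sqrt (pFn 𝔠 i θ) * v i) = pFn 𝔠 i θ * v i := by
      intro i
      rw [show Real.sqrt (pFn 𝔠 i θ) * (Real.sqrt (pFn 𝔠 i θ) * v i)
        = Real.sqrt (pFn 𝔠 i θ) * Real.sqrt (pFn 𝔠 i θ) * v i by ring,
        Real.mul_self_sqrt (hp0 i).le]
    have e2 : ∀ i, Real.sqrt (pFn 𝔠 i θ) ^ 2 = pFn 𝔠 i θ := fun i => Real.sq_sqrt (hp0 i).le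
    have e3 : ∀ i, (Real.sqrt (pFn 𝔠 i θ) * v i) ^ 2 = pFn 𝔠 i θ * v i ^ 2 := by
      intro i; rw [mul_pow, e2]
    rw [Finset.sum_congr rfl fun i _ => e1 i, Finset.sum_congr rfl fun i _ => e2 i,
      Finset.sum_congr rfl fun i _ => e3 i] at hcs
    nlinarith [hcs, hQ0, hσ]
  · -- P² ≥ 2 Σ p_i² v_i² − σ Q
    have hP2 : (∑ i, pFn 𝔠 i θ * v i) ^ 2
        = ∑ i : Fin 𝔠, ∑ j : Fin 𝔠, (pFn 𝔠 i θ * v i) * (pFn 𝔠 j θ * v j) := by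
      rw [sq, Finset.sum_mul_sum]
    have htw : ∀ i j : Fin 𝔠, (pFn 𝔠 i θ * v i) * (pFn 𝔠 j θ * v j)
        ≥ -(pFn 𝔠 i θ * pFn 𝔠 j θ * (v i ^ 2 + v j ^ 2)) / 2
          + (if i = j then 2 * pFn 𝔠 i θ ^ 2 * v i ^ 2 else 0) := by
      intro i j
      by_cases h : i = j
      · subst h; simp only [eq_self_iff_true, if_true]; nlinarith [sq_nonneg (v i)]
      · simp only [if_neg h]
        nlinarith [mul_nonneg (mul_nonneg (hp0 i).le (hp0 j).le) (sq_nonneg (v i + v j))]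
    have hsum := Finset.sum_le_sum
      (fun i (_ : i ∈ Finset.univ) => Finset.sum_le_sum
        (fun j (_ : j ∈ Finset.univ) => htw i j))
    rw [← hP2] at hsum
    have hleft1 : ∑ i : Fin 𝔠, ∑ j : Fin 𝔠, -(pFn 𝔠 i θ * pFn 𝔠 j θ * (v i ^ 2 + v j ^ 2)) / 2
        = -((∑ i, pFn 𝔠 i θ) * (∑ i, pFn 𝔠 i θ * v i ^ 2)) := by
      have h := Finset.sum_mul_sum Finset.univ Finset.univ (fun i => pFn 𝔠 i θ)
        (fun j => pFn 𝔠 j θ * v j ^ 2)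
      have h2 := Finset.sum_mul_sum Finset.univ Finset.univ (fun i => pFn 𝔠 i θ * v i ^ 2)
        (fun j => pFn 𝔠 j θ)
      calc ∑ i : Fin 𝔠, ∑ j : Fin 𝔠, -(pFn 𝔠 i θ * pFn 𝔠 j θ * (v i ^ 2 + v j ^ 2)) / 2
          = ∑ i : Fin 𝔠, ∑ j : Fin 𝔠, ((-1/2) * (pFn 𝔠 i θ * (pFn 𝔠 j θ * v j ^ 2))
              + (-1/2) * ((pFn 𝔠 i θ * v i ^ 2) * pFn 𝔠 j θ)) :=
            Finset.sum_congr rfl fun i _ => Finset.sum_congr rfl fun j _ => by ring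
        _ = (-1/2) * (∑ i : Fin 𝔠, ∑ j : Fin 𝔠, pFn 𝔠 i θ * (pFn 𝔠 j θ * v j ^ 2))
              + (-1/2) * (∑ i : Fin 𝔠, ∑ j : Fin 𝔠, (pFn 𝔠 i θ * v i ^ 2) * pFn 𝔠 j θ) := by
            simp only [Finset.sum_add_distrib, ← Finset.mul_sum]
        _ = -((∑ i, pFn 𝔠 i θ) * (∑ i, pFn 𝔠 i θ * v i ^ 2)) := by rw [← h, ← h2]; ring
    have e5 : ∀ i : Fin 𝔠, ∑ j : Fin 𝔠, (if i = j then 2 * pFn 𝔠 i θ ^ 2 * v i ^ 2 else 0)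
        = 2 * pFn 𝔠 i θ ^ 2 * v i ^ 2 := by
      intro i
      rw [Finset.sum_ite_eq Finset.univ i (fun _ => 2 * pFn 𝔠 i θ ^ 2 * v i ^ 2)]
      simp
    have hleft : ∑ i : Fin 𝔠, ∑ j : Fin 𝔠,
        (-(pFn 𝔠 i θ * pFn 𝔠 j θ * (v i ^ 2 + v j ^ 2)) / 2
          + (if i = j then 2 * pFn 𝔠 i θ ^ 2 * v i ^ 2 else 0))
        = -((∑ i, pFn 𝔠 i θ) * (∑ i, pFn 𝔠 i θ * v i ^ 2))
          + 2 * ∑ i, pFn 𝔠 i θ ^ 2 * v i ^ 2 := by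
      simp only [Finset.sum_add_distrib]
      rw [hleft1, Finset.sum_congr rfl fun i _ => e5 i]
      congr 1
      rw [Finset.mul_sum]
      exact Finset.sum_congr rfl fun i _ => by ring
    rw [hleft] at hsum
    -- Q − P² ≤ Q + σQ − 2Σp² ≤ 2Σ p_i(1−p_i) v_i² ≤ N/2
    have hfin : ∑ i, pFn 𝔠 i θ * v i ^ 2 - (∑ i, pFn 𝔠 i θ * v i) ^ 2
        ≤ 2 * ∑ i, (pFn 𝔠 i θ * v i ^ 2 - pFn 𝔠 i θ ^ 2 * v i ^ 2) := by
      have hσQ : (∑ i, pFn 𝔠 i θ) * (∑ i, pFn 𝔠 i θ * v i ^ 2)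
          ≤ ∑ i, pFn 𝔠 i θ * v i ^ 2 := by nlinarith [hσ, hQ0]
      rw [Finset.sum_sub_distrib]
      nlinarith [hsum, hσQ]
    have hpt : ∀ i : Fin 𝔠, 2 * (pFn 𝔠 i θ * v i ^ 2 - pFn 𝔠 i θ ^ 2 * v i ^ 2)
        ≤ v i ^ 2 / 2 := by
      intro i
      nlinarith [sq_nonneg (v i), sq_nonneg (pFn 𝔠 i θ - 1/2), sq_nonneg (v i * (pFn 𝔠 i θ - 1/2))]
    calc (∑ i, pFn 𝔠 i θ * v i ^ 2) - (∑ i, pFn 𝔠 i θ * v i) ^ 2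
        ≤ 2 * ∑ i, (pFn 𝔠 i θ * v i ^ 2 - pFn 𝔠 i θ ^ 2 * v i ^ 2) := hfin
      _ = ∑ i, 2 * (pFn 𝔠 i θ * v i ^ 2 - pFn 𝔠 i θ ^ 2 * v i ^ 2) := by rw [Finset.mul_sum]
      _ ≤ ∑ i, v i ^ 2 / 2 := Finset.sum_le_sum fun i _ => hpt i
      _ = (∑ i, v i ^ 2) / 2 := by rw [Finset.sum_div]

lemma pert_bound (𝔠 : ℕ) (θ v : Fin 𝔠 → ℝ) :
    |(∑ i, cF 𝔠 i θ * v i ^ 2) / 2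
      - (∑ i, pFn 𝔠 i θ * v i) * (∑ i, cF 𝔠 i θ * v i)|
      ≤ 𝔠 / Real.exp 1 * (𝔠 + 2) / 2 * (∑ i, v i ^ 2) := by
  set K : ℝ := 𝔠 / Real.exp 1 with hK
  have hK0 : 0 ≤ K := by positivity
  set N : ℝ := ∑ i, v i ^ 2 with hN
  have hN0 : 0 ≤ N := Finset.sum_nonneg fun i _ => sq_nonneg _
  have hc : ∀ i, |cF 𝔠 i θ| ≤ K := fun i => cF_abs_le 𝔠 i θ
  have h1 : |∑ i, cF 𝔠 i θ * v i ^ 2| ≤ K * N := by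
    calc |∑ i, cF 𝔠 i θ * v i ^ 2| ≤ ∑ i, |cF 𝔠 i θ * v i ^ 2| :=
          Finset.abs_sum_le_sum_abs _ _
      _ ≤ ∑ i, K * v i ^ 2 := by
          refine Finset.sum_le_sum fun i _ => ?_
          rw [abs_mul, abs_of_nonneg (sq_nonneg (v i))]
          exact mul_le_mul_of_nonneg_right (hc i) (sq_nonneg _)
      _ = K * N := by rw [← Finset.mul_sum]
  have hPabs : |∑ i, pFn 𝔠 i θ * v i| ≤ ∑ i, pFn 𝔠 i θ * |v i| := by
    calc |∑ i, pFn 𝔠 i θ * v i| ≤ ∑ i, |pFn 𝔠 i θ * v i| := Finset.abs_sum_le_sum_abs _ _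
      _ = ∑ i, pFn 𝔠 i θ * |v i| := Finset.sum_congr rfl fun i _ => by
          rw [abs_mul, abs_of_pos (pFn_pos 𝔠 i θ)]
  have hCabs : |∑ i, cF 𝔠 i θ * v i| ≤ K * ∑ i, |v i| := by
    calc |∑ i, cF 𝔠 i θ * v i| ≤ ∑ i, |cF 𝔠 i θ * v i| := Finset.abs_sum_le_sum_abs _ _
      _ ≤ ∑ i, K * |v i| := by
          refine Finset.sum_le_sum fun i _ => ?_
          rw [abs_mul]
          exact mul_le_mul_of_nonneg_right (hc i) (abs_nonneg _)
      _ = K * ∑ i, |v i| := by rw [← Finset.mul_sum]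
  have hQN : ∑ i, pFn 𝔠 i θ * v i ^ 2 ≤ N := by
    refine Finset.sum_le_sum fun i _ => ?_
    nlinarith [pFn_le_one 𝔠 i θ, (pFn_pos 𝔠 i θ).le, sq_nonneg (v i)]
  have hPaVa : (∑ i, pFn 𝔠 i θ * |v i|) * (∑ j, |v j|) ≤ (𝔠 + 1) * N / 2 := by
    rw [Finset.sum_mul_sum]
    have tw : ∀ i j : Fin 𝔠, pFn 𝔠 i θ * |v i| * |v j|
        ≤ pFn 𝔠 i θ * v i ^ 2 / 2 + pFn 𝔠 i θ * v j ^ 2 / 2 := by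
      intro i j
      have h1 := sq_nonneg (|v i| - |v j|)
      have h2 := sq_abs (v i)
      have h3 := sq_abs (v j)
      nlinarith [(pFn_pos 𝔠 i θ).le, abs_nonneg (v i), abs_nonneg (v j)]
    calc ∑ i : Fin 𝔠, ∑ j : Fin 𝔠, pFn 𝔠 i θ * |v i| * |v j|
        ≤ ∑ i : Fin 𝔠, ∑ j : Fin 𝔠, (pFn 𝔠 i θ * v i ^ 2 / 2 + pFn 𝔠 i θ * v j ^ 2 / 2) :=
          Finset.sum_le_sum fun i _ => Finset.sum_le_sum fun j _ => tw i j
      _ = ∑ i : Fin 𝔠, ((𝔠 : ℝ) * (pFn 𝔠 i θ * v i ^ 2 / 2) + pFn 𝔠 i θ / 2 * N) := by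
          refine Finset.sum_congr rfl fun i _ => ?_
          rw [Finset.sum_add_distrib, Finset.sum_const, Finset.card_univ, Fintype.card_fin,
            nsmul_eq_mul]
          congr 1
          rw [show pFn 𝔠 i θ / 2 * N = ∑ j, pFn 𝔠 i θ * v j ^ 2 / 2 from by
            rw [hN, Finset.mul_sum]; exact Finset.sum_congr rfl fun j _ => by ring]
      _ ≤ (𝔠 + 1) * N / 2 := by
          rw [Finset.sum_add_distrib, ← Finset.mul_sum, ← Finset.sum_mul]
          have hσ := sum_pFn_le 𝔠 θ
          have hσ0 : 0 ≤ ∑ i, pFn 𝔠 i θ :=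
            Finset.sum_nonneg fun i _ => (pFn_pos 𝔠 i θ).le
          have hQ0 : 0 ≤ ∑ i, pFn 𝔠 i θ * v i ^ 2 :=
            Finset.sum_nonneg fun i _ => mul_nonneg (pFn_pos 𝔠 i θ).le (sq_nonneg _)
          have e1 : ∑ i, pFn 𝔠 i θ * v i ^ 2 / 2 = (∑ i, pFn 𝔠 i θ * v i ^ 2) / 2 := by
            rw [Finset.sum_div]
          have e2 : ∑ i, pFn 𝔠 i θ / 2 = (∑ i, pFn 𝔠 i θ) / 2 := by rw [Finset.sum_div]
          rw [e1, e2]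
          nlinarith [hQN]
  have hPC : |(∑ i, pFn 𝔠 i θ * v i) * (∑ i, cF 𝔠 i θ * v i)| ≤ K * ((𝔠 + 1) * N / 2) := by
    rw [abs_mul]
    have hP0 : 0 ≤ ∑ i, pFn 𝔠 i θ * |v i| :=
      Finset.sum_nonneg fun i _ => mul_nonneg (pFn_pos 𝔠 i θ).le (abs_nonneg _)
    have hV0 : 0 ≤ ∑ i, |v i| := Finset.sum_nonneg fun i _ => abs_nonneg _
    calc |∑ i, pFn 𝔠 i θ * v i| * |∑ i, cF 𝔠 i θ * v i|
        ≤ (∑ i, pFn 𝔠 i θ * |v i|) * (K * ∑ i, |v i|) :=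
          mul_le_mul hPabs hCabs (abs_nonneg _) hP0
      _ = K * ((∑ i, pFn 𝔠 i θ * |v i|) * (∑ j, |v j|)) := by ring
      _ ≤ K * ((𝔠 + 1) * N / 2) := mul_le_mul_of_nonneg_left hPaVa hK0
  calc |(∑ i, cF 𝔠 i θ * v i ^ 2) / 2
      - (∑ i, pFn 𝔠 i θ * v i) * (∑ i, cF 𝔠 i θ * v i)|
      ≤ |(∑ i, cF 𝔠 i θ * v i ^ 2) / 2|
        + |(∑ i, pFn 𝔠 i θ * v i) * (∑ i, cF 𝔠 i θ * v i)| := abs_sub _ _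
    _ ≤ K * N / 2 + K * ((𝔠 + 1) * N / 2) := by
        rw [abs_div]
        refine add_le_add ?_ hPC
        rw [show |(2:ℝ)| = 2 by norm_num]
        linarith [h1]
    _ = K * (𝔠 + 2) / 2 * N := by ring

lemma Bmat_symm (𝔠 : ℕ) (θ : Fin 𝔠 → ℝ) (i j : Fin 𝔠) : Bmat 𝔠 θ i j = Bmat 𝔠 θ j i := by
  rw [Bmat_apply, Bmat_apply]
  by_cases h : i = j
  · subst h; ring
  · simp only [if_neg h, if_neg (Ne.symm h)]; ring

lemma Bmat_herm (𝔠 : ℕ) (θ : Fin 𝔠 → ℝ) : (Bmat 𝔠 θ).IsHermitian := by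
  rw [Matrix.IsHermitian]
  ext i j
  rw [Matrix.conjTranspose_apply, star_trivial]
  exact Bmat_symm 𝔠 θ j i

lemma smul_one_herm (𝔠 : ℕ) (c : ℝ) : (c • (1 : Matrix (Fin 𝔠) (Fin 𝔠) ℝ)).IsHermitian := by
  rw [Matrix.IsHermitian]
  ext i j
  rw [Matrix.conjTranspose_apply, star_trivial, Matrix.smul_apply, Matrix.smul_apply,
    Matrix.one_apply, Matrix.one_apply]
  by_cases h : i = j
  · subst h; rfl
  · rw [if_neg h, if_neg (Ne.symm h)]

theorem Bmat_loewner_bounds (𝔠 : ℕ) (h𝔠 : 1 ≤ 𝔠) (θ : Fin 𝔠 → ℝ) :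
    (Bmat 𝔠 θ - (-((((𝔠 : ℝ) + 1) ^ 2 - 1) / (2 * Real.exp 1))) • (1 : Matrix (Fin 𝔠) (Fin 𝔠) ℝ)).PosSemidef ∧
    (((1 / 2) * (1 + (((𝔠 : ℝ) + 1) ^ 2 - 1) / Real.exp 1)) • (1 : Matrix (Fin 𝔠) (Fin 𝔠) ℝ) - Bmat 𝔠 θ).PosSemidef := by
  have hE : (0:ℝ) < Real.exp 1 := Real.exp_pos 1
  have hconst : (((𝔠 : ℝ) + 1) ^ 2 - 1) / (2 * Real.exp 1) = 𝔠 / Real.exp 1 * (𝔠 + 2) / 2 := by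
    field_simp; ring
  have hxx : ∀ x : Fin 𝔠 → ℝ, x ⬝ᵥ x = ∑ i, x i ^ 2 := by
    intro x
    simp [dotProduct, sq]
  have hlow : ∀ v : Fin 𝔠 → ℝ,
      -(𝔠 / Real.exp 1 * (𝔠 + 2) / 2) * (∑ i, v i ^ 2) ≤ v ⬝ᵥ (Bmat 𝔠 θ).mulVec v := by
    intro v
    have h1 := var_bounds 𝔠 θ v
    have h2 := abs_le.mp (pert_bound 𝔠 θ v)
    rw [quad_form]
    linarith [h1.1, h2.1]
  have hup : ∀ v : Fin 𝔠 → ℝ,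
      v ⬝ᵥ (Bmat 𝔠 θ).mulVec v
        ≤ (1 / 2 + 𝔠 / Real.exp 1 * (𝔠 + 2) / 2) * (∑ i, v i ^ 2) := by
    intro v
    have h1 := var_bounds 𝔠 θ v
    have h2 := abs_le.mp (pert_bound 𝔠 θ v)
    rw [quad_form]
    linarith [h1.2, h2.2]
  constructor
  · refine Matrix.PosSemidef.of_dotProduct_mulVec_nonneg ((Bmat_herm 𝔠 θ).sub (smul_one_herm 𝔠 _)) fun x => ?_
    have hst : star x = x := funext fun i => star_trivial _
    rw [hst, Matrix.sub_mulVec, dotProduct_sub, Matrix.smul_mulVec,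
      Matrix.one_mulVec, dotProduct_smul, smul_eq_mul, hxx]
    have := hlow x
    rw [show -((((𝔠 : ℝ) + 1) ^ 2 - 1) / (2 * Real.exp 1))
      = -((𝔠 : ℝ) / Real.exp 1 * (𝔠 + 2) / 2) from by rw [hconst]]
    linarith [this]
  · refine Matrix.PosSemidef.of_dotProduct_mulVec_nonneg ((smul_one_herm 𝔠 _).sub (Bmat_herm 𝔠 θ)) fun x => ?_
    have hst : star x = x := funext fun i => star_trivial _
    rw [hst, Matrix.sub_mulVec, dotProduct_sub, Matrix.smul_mulVec,
      Matrix.one_mulVec, dotProduct_smul, smul_eq_mul, hxx]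
    have := hup x
    rw [show (1 / 2 : ℝ) * (1 + (((𝔠 : ℝ) + 1) ^ 2 - 1) / Real.exp 1)
      = 1 / 2 + (𝔠 : ℝ) / Real.exp 1 * (𝔠 + 2) / 2 from by field_simp; ring]
    linarith [this]
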